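/- Let R be commutative, σ : P⁻¹ → P⁰ a map of projective R-modules with cokernel T, I an ideal such that V(I) ⊆ {𝔭 : σ ⊗_R κ(𝔭) not injective} and T ⊗_R (R/I) = 0. Then the short exact sequence 0 → Ker(σ ⊗ R/I) → P⁻¹ ⊗ R/I → P⁰ ⊗ R/I → 0 splits, Ker(σ ⊗ R/I) is a projective R/I-module, and Ker(σ ⊗ R/I) ⊗_{R/I} κ(𝔭) ≠ 0 for all primes 𝔭 ⊇ I; hence Ker(σ ⊗_R R/I) is a projective generator of Mod-R/I. -/

import Mathlib

open TensorProduct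

/-- `M` is generated by `T`. -/
def IsGenBy (A T M : Type*) [Ring A] [AddCommGroup T] [AddCommGroup M]
    [Module A T] [Module A M] : Prop :=
  (⨆ φ : T →ₗ[A] M, LinearMap.range φ) = ⊤

universe u

/-- The trace ideal of a projective module with nonzero fibers is the whole ring. -/
lemma stmt13_trace_top {A P : Type u} [CommRing A] [AddCommGroup P] [Module A P]
    [Module.Projective A P]
    (h : ∀ p : PrimeSpectrum A, Nontrivial
      ((IsLocalRing.ResidueField (Localization.AtPrime p.asIdeal)) ⊗[A] P))
    [Nontrivial A] :
    (⨆ f : P →ₗ[A] A, LinearMap.range f) = ⊤ := by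
  by_contra hne
  obtain ⟨m, hm, hle⟩ := Ideal.exists_le_maximal _ hne
  haveI : m.IsPrime := hm.isPrime
  have hnt := h ⟨m, hm.isPrime⟩
  obtain ⟨sP, hsP⟩ := Module.projective_def'.mp ‹Module.Projective A P›
  set κ := IsLocalRing.ResidueField (Localization.AtPrime m) with hκ
  have hmap : ∀ a ∈ m, algebraMap A κ a = 0 := by
    intro a ha
    have : algebraMap A (Localization.AtPrime m) a ∈ IsLocalRing.maximalIdeal _ := by
      rw [IsLocalization.AtPrime.to_map_mem_maximal_iff (Localization.AtPrime m) m]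
      exact ha
    exact Ideal.Quotient.eq_zero_iff_mem.mpr this
  have key : ∀ (c : κ) (x : P), (c ⊗ₜ[A] x : κ ⊗[A] P) = 0 := by
    intro c x
    have hx : ((sP x).sum fun e a => a • (id e : P)) = x := by
      have := congrArg (fun f => f x) hsP
      simpa [Finsupp.linearCombination_apply] using this
    calc (c ⊗ₜ[A] x : κ ⊗[A] P) = c ⊗ₜ[A] ((sP x).sum fun e a => a • (id e : P)) := by
          rw [hx]
      _ = (sP x).sum fun e a => c ⊗ₜ[A] (a • e) := by
          rw [Finsupp.sum, tmul_sum]; rfl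
      _ = 0 := by
          rw [Finsupp.sum]
          apply Finset.sum_eq_zero
          intro e he
          have hmem : sP x e ∈ m := by
            apply hle
            have : LinearMap.range ((Finsupp.lapply e).comp sP)
                ≤ ⨆ f : P →ₗ[A] A, LinearMap.range f :=
              le_iSup (fun f : P →ₗ[A] A => LinearMap.range f) _
            exact this ⟨x, rfl⟩
          rw [tmul_smul, smul_tmul', Algebra.smul_def, hmap _ hmem, zero_mul, zero_tmul]
  have : Subsingleton (κ ⊗[A] P) := by
    constructor
    intro a b
    have hz : ∀ z : κ ⊗[A] P, z = 0 := by
      intro z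
      induction z using TensorProduct.induction_on with
      | zero => rfl
      | tmul c x => exact key c x
      | add x y hx hy => rw [hx, hy, add_zero]
    rw [hz a, hz b]
  exact (not_subsingleton_iff_nontrivial.mpr hnt) this

/-- A projective module with nonzero fibers at all primes is a generator. -/
lemma stmt13_gen_of_proj {A P : Type u} [CommRing A] [AddCommGroup P] [Module A P]
    [Module.Projective A P]
    (h : ∀ p : PrimeSpectrum A, Nontrivial
      ((IsLocalRing.ResidueField (Localization.AtPrime p.asIdeal)) ⊗[A] P))
    (M : Type u) [AddCommGroup M] [Module A M] : IsGenBy A P M := by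
  by_cases hA : Nontrivial A
  · rw [IsGenBy, Submodule.eq_top_iff']
    intro y
    have hτ := stmt13_trace_top (A := A) (P := P) h
    have h1 : y ∈ Submodule.map (LinearMap.toSpanSingleton A M y) (⊤ : Ideal A) :=
      ⟨1, trivial, by simp⟩
    rw [← hτ, Submodule.map_iSup] at h1
    refine (iSup_le fun f => ?_ : _ ≤ ⨆ φ : P →ₗ[A] M, LinearMap.range φ) h1
    rw [← LinearMap.range_comp]
    exact le_iSup (fun φ : P →ₗ[A] M => LinearMap.range φ) _
  · haveI : Subsingleton A := not_nontrivial_iff_subsingleton.mp hA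
    haveI : Subsingleton M := Module.subsingleton A M
    exact Subsingleton.elim _ _

/-- Base change of a split epimorphism has trivial kernel if the base-changed
kernel summand vanishes. -/
lemma stmt13_stepA {S : Type u} [CommRing S] {V W Kt : Type u}
    [AddCommGroup V] [AddCommGroup W] [AddCommGroup Kt]
    [Module S V] [Module S W] [Module S Kt]
    (f : V →ₗ[S] W) (incl : Kt →ₗ[S] V) (r : V →ₗ[S] Kt) (s : W →ₗ[S] V)
    (hdecomp : incl ∘ₗ r + s ∘ₗ f = LinearMap.id)
    (κ : Type u) [CommRing κ] [Algebra S κ] [Subsingleton (κ ⊗[S] Kt)] :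
    Function.Injective (f.baseChange κ) := by
  intro x y hxy
  rw [← sub_eq_zero] at hxy ⊢
  set z := x - y with hz
  have hz0 : (f.baseChange κ) z = 0 := by rw [hz, map_sub]; exact hxy
  have hsum : ((incl ∘ₗ r + s ∘ₗ f).baseChange κ) z
      = (LinearMap.baseChange κ (LinearMap.id)) z := by rw [hdecomp]
  rw [LinearMap.baseChange_add, LinearMap.baseChange_comp, LinearMap.baseChange_comp,
    LinearMap.baseChange_id] at hsum
  simp only [LinearMap.add_apply, LinearMap.comp_apply, LinearMap.id_apply] at hsum
  rw [hz0, map_zero] at hsum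
  have h0 : (r.baseChange κ) z = 0 := Subsingleton.elim _ _
  rw [h0, map_zero, zero_add] at hsum
  exact hsum.symm

/-- Transitivity of base change for injectivity. -/
lemma stmt13_stepB {R S κ : Type u} [CommRing R] [CommRing S] [CommRing κ]
    [Algebra R S] [Algebra S κ] [Algebra R κ] [IsScalarTower R S κ]
    {P1 P0 : Type u} [AddCommGroup P1] [AddCommGroup P0] [Module R P1] [Module R P0]
    (σ : P1 →ₗ[R] P0)
    (h : Function.Injective ((σ.baseChange S).baseChange κ)) :
    Function.Injective (σ.baseChange κ) := by
  let e1 := AlgebraTensorModule.cancelBaseChange R S κ κ P1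
  let e0 := AlgebraTensorModule.cancelBaseChange R S κ κ P0
  have comm : ∀ z : κ ⊗[S] (S ⊗[R] P1),
      e0 (((σ.baseChange S).baseChange κ) z) = (σ.baseChange κ) (e1 z) := by
    intro z
    induction z using TensorProduct.induction_on with
    | zero => simp
    | add a b ha hb => simp [map_add, ha, hb]
    | tmul c w =>
      induction w using TensorProduct.induction_on with
      | zero => simp
      | add a b ha hb => simp only [tmul_add, map_add] at ha hb ⊢; rw [ha, hb]
      | tmul t m =>
        simp [e0, e1, AlgebraTensorModule.cancelBaseChange_tmul]
  intro x y hxy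
  have h1 : ((σ.baseChange S).baseChange κ) (e1.symm x)
      = ((σ.baseChange S).baseChange κ) (e1.symm y) := by
    apply e0.injective
    rw [comm, comm, e1.apply_symm_apply, e1.apply_symm_apply, hxy]
  have h2 := h h1
  calc x = e1 (e1.symm x) := (e1.apply_symm_apply x).symm
    _ = e1 (e1.symm y) := by rw [h2]
    _ = y := e1.apply_symm_apply y

/-- Injectivity of tensored maps descends along injections of coefficient modules. -/
lemma stmt13_stepC {R : Type u} [CommRing R] {A B : Type u} [AddCommGroup A] [AddCommGroup B]
    [Module R A] [Module R B]
    {P1 P0 : Type u} [AddCommGroup P1] [AddCommGroup P0] [Module R P1] [Module R P0]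
    [Module.Flat R P1]
    (σ : P1 →ₗ[R] P0) (j : A →ₗ[R] B) (hj : Function.Injective j)
    (h : Function.Injective (σ.lTensor B)) :
    Function.Injective (σ.lTensor A) := by
  have hcomm : (σ.lTensor B) ∘ₗ (j.rTensor P1) = (j.rTensor P0) ∘ₗ (σ.lTensor A) := by
    rw [LinearMap.lTensor_comp_rTensor, LinearMap.rTensor_comp_lTensor]
  have hrt : Function.Injective (j.rTensor P1) :=
    Module.Flat.rTensor_preserves_injective_linearMap j hj
  intro x y hxy
  apply hrt
  apply h
  have h1 := congrArg (fun f => f x) hcomm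
  have h2 := congrArg (fun f => f y) hcomm
  simp only [LinearMap.comp_apply] at h1 h2
  rw [h1, h2, hxy]

set_option maxHeartbeats 1000000 in
/-- let `σ : P⁻¹ → P⁰` (projective `R`-modules) have cokernel `T`, and let
`I` be an ideal with `V(I) ⊆ {p : σ ⊗ κ(p) not injective}` and `T ⊗_R R/I = 0`.  Then
`σ ⊗ R/I` is a split epimorphism, its kernel is a projective `R/I`-module with
`Ker(σ ⊗ R/I) ⊗ κ(p) ≠ 0` for all primes `p` of `R/I`, and `Ker(σ ⊗ R/I)` is a
(projective) generator of `Mod-R/I`. -/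
theorem stmt13 {R : Type u} [CommRing R]
    {P1 P0 T : Type u} [AddCommGroup P1] [AddCommGroup P0] [AddCommGroup T]
    [Module R P1] [Module R P0] [Module R T]
    [Module.Projective R P1] [Module.Projective R P0]
    (σ : P1 →ₗ[R] P0) (π : P0 →ₗ[R] T) (hπ : Function.Surjective π)
    (hcoker : LinearMap.ker π = LinearMap.range σ)
    (I : Ideal R)
    (hV : ∀ p : PrimeSpectrum R, I ≤ p.asIdeal →
      ¬ Function.Injective (σ.baseChange
        (IsLocalRing.ResidueField (Localization.AtPrime p.asIdeal))))
    (hT : Subsingleton ((R ⧸ I) ⊗[R] T)) :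
    (∃ s : ((R ⧸ I) ⊗[R] P0) →ₗ[R ⧸ I] ((R ⧸ I) ⊗[R] P1),
      σ.baseChange (R ⧸ I) ∘ₗ s = LinearMap.id) ∧
    Module.Projective (R ⧸ I) (LinearMap.ker (σ.baseChange (R ⧸ I))) ∧
    (∀ p : PrimeSpectrum (R ⧸ I),
      Nontrivial ((IsLocalRing.ResidueField (Localization.AtPrime p.asIdeal))
        ⊗[R ⧸ I] (LinearMap.ker (σ.baseChange (R ⧸ I))))) ∧
    (∀ (M : Type u) [AddCommGroup M] [Module (R ⧸ I) M],
      IsGenBy (R ⧸ I) (LinearMap.ker (σ.baseChange (R ⧸ I))) M) := by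
  -- surjectivity of the base-changed map
  have hexact : Function.Exact σ π := LinearMap.exact_iff.mpr hcoker
  have hexactS : Function.Exact (σ.lTensor (R ⧸ I)) (π.lTensor (R ⧸ I)) :=
    lTensor_exact (R ⧸ I) hexact hπ
  have hsurj : Function.Surjective (σ.baseChange (R ⧸ I)) := by
    rw [LinearMap.baseChange_eq_ltensor]
    intro y
    have : (π.lTensor (R ⧸ I)) y = 0 := Subsingleton.elim _ _
    exact (hexactS y).mp this
  -- the splitting
  obtain ⟨s, hs⟩ := Module.projective_lifting_property (σ.baseChange (R ⧸ I))
    (LinearMap.id) hsurj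
  -- the retraction onto the kernel
  have hker : ∀ x : (R ⧸ I) ⊗[R] P1,
      σ.baseChange (R ⧸ I) (x - s (σ.baseChange (R ⧸ I) x)) = 0 := by
    intro x
    have := congrArg (fun f => f (σ.baseChange (R ⧸ I) x)) hs
    simp only [LinearMap.comp_apply, LinearMap.id_apply] at this
    simp [map_sub, this]
  let r : ((R ⧸ I) ⊗[R] P1) →ₗ[R ⧸ I] (LinearMap.ker (σ.baseChange (R ⧸ I))) :=
    LinearMap.codRestrict (LinearMap.ker (σ.baseChange (R ⧸ I)))
      (LinearMap.id - s ∘ₗ σ.baseChange (R ⧸ I))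
      (fun x => by rw [LinearMap.mem_ker]; simpa using hker x)
  have hretr : r ∘ₗ (LinearMap.ker (σ.baseChange (R ⧸ I))).subtype = LinearMap.id := by
    ext ⟨x, hx⟩
    simp [r, LinearMap.mem_ker.mp hx]
  have hprojK : Module.Projective (R ⧸ I) (LinearMap.ker (σ.baseChange (R ⧸ I))) :=
    Module.Projective.of_split (LinearMap.ker (σ.baseChange (R ⧸ I))).subtype r hretr
  have hdecomp : (LinearMap.ker (σ.baseChange (R ⧸ I))).subtype ∘ₗ r
      + s ∘ₗ σ.baseChange (R ⧸ I) = LinearMap.id := by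
    ext x
    simp [r]
  clear_value r
  -- nontriviality of the fibers
  have hfib : ∀ p : PrimeSpectrum (R ⧸ I),
      Nontrivial ((IsLocalRing.ResidueField (Localization.AtPrime p.asIdeal))
        ⊗[R ⧸ I] (LinearMap.ker (σ.baseChange (R ⧸ I)))) := by
    intro p
    by_contra hnt
    haveI hss : Subsingleton ((IsLocalRing.ResidueField (Localization.AtPrime p.asIdeal))
        ⊗[R ⧸ I] (LinearMap.ker (σ.baseChange (R ⧸ I)))) :=
      not_nontrivial_iff_subsingleton.mp hnt
    letI κ := IsLocalRing.ResidueField (Localization.AtPrime p.asIdeal)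
    have hinjA : Function.Injective ((σ.baseChange (R ⧸ I)).baseChange κ) :=
      stmt13_stepA (Kt := LinearMap.ker (σ.baseChange (R ⧸ I))) (σ.baseChange (R ⧸ I)) (LinearMap.ker (σ.baseChange (R ⧸ I))).subtype
        r s hdecomp κ
    letI : Algebra R κ := ((algebraMap (R ⧸ I) κ).comp (algebraMap R (R ⧸ I))).toAlgebra
    letI : IsScalarTower R (R ⧸ I) κ := IsScalarTower.of_algebraMap_eq' rfl
    letI : Module R κ := Algebra.toModule
    have hinjB : Function.Injective (σ.baseChange κ) := stmt13_stepB σ hinjA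
    letI q : PrimeSpectrum R := ⟨p.asIdeal.comap (Ideal.Quotient.mk I), Ideal.IsPrime.comap _⟩
    have hIq : I ≤ q.asIdeal := fun a ha => by
      show Ideal.Quotient.mk I a ∈ p.asIdeal
      rw [Ideal.Quotient.eq_zero_iff_mem.mpr ha]
      exact p.asIdeal.zero_mem
    letI κ' := IsLocalRing.ResidueField (Localization.AtPrime q.asIdeal)
    haveI := Localization.isLocalHom_localRingHom q.asIdeal p.asIdeal (Ideal.Quotient.mk I) rfl
    letI j0 : κ' →+* κ :=
      IsLocalRing.ResidueField.map
        (Localization.localRingHom q.asIdeal p.asIdeal (Ideal.Quotient.mk I) rfl)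
    have hj0alg : ∀ a : R, j0 (algebraMap R κ' a) = algebraMap R κ a := by
      intro a
      show j0 (IsLocalRing.residue _ (algebraMap R (Localization.AtPrime q.asIdeal) a)) = _
      rw [IsLocalRing.ResidueField.map_residue, Localization.localRingHom_to_map]
      rfl
    letI j : κ' →ₗ[R] κ :=
      { toFun := j0
        map_add' := map_add j0
        map_smul' := by
          intro a x
          simp only [RingHom.id_apply]
          rw [Algebra.smul_def, Algebra.smul_def, map_mul, hj0alg] }
    have hj : Function.Injective j := RingHom.injective j0
    have hinjC : Function.Injective (σ.lTensor κ') := by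
      apply stmt13_stepC σ j hj
      rw [← LinearMap.baseChange_eq_ltensor]
      exact hinjB
    apply hV q hIq
    rw [LinearMap.baseChange_eq_ltensor]
    exact hinjC
  refine ⟨⟨s, hs⟩, hprojK, hfib, ?_⟩
  intro M _ _
  exact stmt13_gen_of_proj (A := R ⧸ I) hfib M
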